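/- arXiv:1404.5184 — 14 statements merged into one kernel-verified Lean document; each statement's English description precedes it below -/
import Mathlib

section
/- Let R be a tolerance (reflexive symmetric relation) on U and x ∈ U. The neighbourhood R(x) is an R-block (maximal R-preblock) if and only if every two elements a, b ∈ R(x) satisfy a R b. -/
variable {α : Type*}

/-- The `R`-neighbourhood of `x`. -/
def nbhd (R : α → α → Prop) (x : α) : Set α := {y | R x y}

/-- A nonempty set all of whose pairs are related: an `R`-preblock. -/
def IsPreblock (R : α → α → Prop) (X : Set α) : Prop :=
  X.Nonempty ∧ ∀ a ∈ X, ∀ b ∈ X, R a b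

/-- An `R`-block: a maximal `R`-preblock. -/
def IsBlock (R : α → α → Prop) (B : Set α) : Prop :=
  IsPreblock R B ∧ ∀ X, IsPreblock R X → B ⊆ X → B = X

/-- A covering of the universe by nonempty sets. -/
def IsCovering (H : Set (Set α)) : Prop :=
  (∀ X ∈ H, X.Nonempty) ∧ ⋃₀ H = Set.univ

/-- An irredundant covering: no member can be removed. -/
def IsIrredundant (H : Set (Set α)) : Prop :=
  IsCovering H ∧ ∀ X ∈ H, ¬ IsCovering (H \ {X})

/-- The family `H` induces the relation `R`. -/
def Induces (H : Set (Set α)) (R : α → α → Prop) : Prop :=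
  ∀ a b, R a b ↔ ∃ X ∈ H, a ∈ X ∧ b ∈ X

/-- Minimal element of a quasiorder. -/
def QMinimal (le : α → α → Prop) (m : α) : Prop := ∀ y, le y m → le m y

/-- Upset of an element. -/
def upset (le : α → α → Prop) (m : α) : Set α := {y | le m y}

/-- The tolerance `≈ = ≳ ∘ ≲` determined by a quasiorder. -/
def approx (le : α → α → Prop) (x y : α) : Prop := ∃ a, le a x ∧ le a y

/-- Bounded by minimal elements. -/
def BoundedByMinimals (le : α → α → Prop) : Prop :=
  ∀ x, ∃ m, QMinimal le m ∧ le m x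

/-- The quasiorder `≲_R` determined by a tolerance. -/
def tolLe (R : α → α → Prop) (x y : α) : Prop := nbhd R x ⊆ nbhd R y

/-- Helly number 2 for a quasiordered set. -/
def Helly2 (le : α → α → Prop) : Prop :=
  ∀ A : Set α, A.Nonempty → (∀ x ∈ A, ∀ y ∈ A, ∃ a, le a x ∧ le a y) →
    ∃ a, ∀ x ∈ A, le a x

/-- A canonical base: a family of `R`-blocks inducing `R`, no member removable. -/
def CanonicalBase (R : α → α → Prop) (K : Set (Set α)) : Prop :=
  (∀ X ∈ K, IsBlock R X) ∧ Induces K R ∧ ∀ X ∈ K, ¬ Induces (K \ {X}) R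

theorem stmt0 (R : α → α → Prop) (hrefl : Reflexive R) (hsymm : Symmetric R) (x : α) :
    IsBlock R (nbhd R x) ↔ ∀ a ∈ nbhd R x, ∀ b ∈ nbhd R x, R a b := by
  constructor
  · rintro ⟨⟨_, hpair⟩, _⟩
    exact hpair
  · intro hpair
    have hx : x ∈ nbhd R x := hrefl x
    refine ⟨⟨⟨x, hx⟩, hpair⟩, ?_⟩
    intro X ⟨_, hXpair⟩ hsub
    apply Set.Subset.antisymm hsub
    intro y hy
    exact hsymm (hXpair y hy x (hsub hx))
end

section
/- Let R be a tolerance on U and x ∈ U. If a ∈ R(x) implies R(x) ⊆ R(a) for all a, then R(x) is an R-block, and conversely. -/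
variable {α : Type*}

theorem stmt1 (R : α → α → Prop) (hrefl : Reflexive R) (hsymm : Symmetric R) (x : α) :
    (∀ a ∈ nbhd R x, nbhd R x ⊆ nbhd R a) ↔ IsBlock R (nbhd R x) := by
  constructor
  · intro h
    refine ⟨⟨⟨x, hrefl x⟩, fun a ha b hb => h a ha hb⟩, ?_⟩
    intro X hX hsub
    apply Set.Subset.antisymm hsub
    intro y hy
    exact hX.2 x (hsub (hrefl x)) y hy
  · intro h a ha b hb
    exact h.1.2 a ha b hb
end

section
/- Let R be a tolerance on U and x ∈ U. R(x) is an R-block if and only if R(x) = ⋂ {R(a) : a ∈ R(x)}. -/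
variable {α : Type*}

theorem stmt2 (R : α → α → Prop) (hrefl : Reflexive R) (hsymm : Symmetric R) (x : α) :
    IsBlock R (nbhd R x) ↔ nbhd R x = ⋂ a ∈ nbhd R x, nbhd R a := by
  constructor
  · rintro ⟨⟨hne, hpair⟩, hmax⟩
    apply Set.Subset.antisymm
    · intro y hy
      simp only [Set.mem_iInter]
      intro a ha
      exact hpair a ha y hy
    · intro y hy
      simp only [Set.mem_iInter] at hy
      exact hy x (hrefl x)
  · intro heq
    have hx : x ∈ nbhd R x := hrefl x
    refine ⟨⟨⟨x, hx⟩, ?_⟩, ?_⟩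
    · intro a ha b hb
      have : b ∈ ⋂ c ∈ nbhd R x, nbhd R c := heq ▸ hb
      simp only [Set.mem_iInter] at this
      exact this a ha
    · rintro X ⟨hXne, hXpair⟩ hsub
      apply Set.Subset.antisymm hsub
      intro y hy
      rw [heq]
      simp only [Set.mem_iInter]
      intro a ha
      exact hXpair a (hsub ha) y hy
end

section
/- If R is a tolerance induced by an irredundant covering H of U, then every member of H is an R-block, i.e., H ⊆ B(R). -/
variable {α : Type*}

theorem stmt6 (R : α → α → Prop) (H : Set (Set α))
    (hH : IsIrredundant H) (hind : Induces H R) :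
    ∀ X ∈ H, IsBlock R X := by
  obtain ⟨⟨hne, hcov⟩, hirr⟩ := hH
  intro X hX
  -- find x covered only by X
  have hnc := hirr X hX
  have : ∃ x, x ∉ ⋃₀ (H \ {X}) := by
    by_contra h
    push_neg at h
    exact hnc ⟨fun Y hY => hne Y hY.1, Set.eq_univ_of_forall h⟩
  obtain ⟨x, hx⟩ := this
  have hxU : x ∈ ⋃₀ H := hcov ▸ Set.mem_univ x
  obtain ⟨Z, hZ, hxZ⟩ := hxU
  have hZX : Z = X := by
    by_contra h
    exact hx ⟨Z, ⟨hZ, h⟩, hxZ⟩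
  subst hZX
  -- X = nbhd R x
  have key : ∀ y, R x y ↔ y ∈ Z := by
    intro y
    rw [hind]
    constructor
    · rintro ⟨Y, hY, hxY, hyY⟩
      have : Y = Z := by
        by_contra h
        exact hx ⟨Y, ⟨hY, h⟩, hxY⟩
      exact this ▸ hyY
    · intro hy
      exact ⟨Z, hZ, hxZ, hy⟩
  have hpre : IsPreblock R Z := by
    refine ⟨⟨x, hxZ⟩, fun a ha b hb => ?_⟩
    exact (hind a b).2 ⟨Z, hZ, ha, hb⟩
  refine ⟨hpre, fun Y hY hsub => ?_⟩
  apply Set.Subset.antisymm hsub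
  intro y hyY
  exact (key y).1 (hY.2 x (hsub hxZ) y hyY)
end

section
/- Let R be a tolerance induced by a covering H of U. Then H is irredundant if and only if every member of H is of the form R(x) for some x ∈ U. -/
variable {α : Type*}

theorem stmt7 (R : α → α → Prop) (H : Set (Set α))
    (hH : IsCovering H) (hind : Induces H R) :
    IsIrredundant H ↔ ∀ X ∈ H, ∃ x, X = nbhd R x := by
  constructor
  · rintro ⟨hcov, hirr⟩ X hX
    have hnc := hirr X hX
    have hne : ∀ Y ∈ H \ {X}, Set.Nonempty Y := fun Y hY => hH.1 Y hY.1
    have hneq : ⋃₀ (H \ {X}) ≠ Set.univ := fun h => hnc ⟨hne, h⟩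
    have : ∃ u, u ∉ ⋃₀ (H \ {X}) := by
      by_contra h; push_neg at h
      exact hneq (Set.eq_univ_of_forall fun u => h u)
    obtain ⟨u, hu⟩ := this
    have huU : u ∈ ⋃₀ H := by rw [hH.2]; trivial
    obtain ⟨Y, hY, huY⟩ := huU
    have hYX : Y = X := by
      by_contra h; exact hu ⟨Y, ⟨hY, h⟩, huY⟩
    subst hYX
    refine ⟨u, Set.Subset.antisymm ?_ ?_⟩
    · intro w hw
      exact (hind u w).2 ⟨Y, hY, huY, hw⟩
    · intro w hw
      obtain ⟨Z, hZ, huZ, hwZ⟩ := (hind u w).1 hw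
      have hZY : Z = Y := by
        by_contra h; exact hu ⟨Z, ⟨hZ, h⟩, huZ⟩
      subst hZY; exact hwZ
  · intro hnb
    refine ⟨hH, fun X hX hc => ?_⟩
    obtain ⟨x, hx⟩ := hnb X hX
    have hxc : x ∈ ⋃₀ (H \ {X}) := by rw [hc.2]; trivial
    obtain ⟨Z, ⟨hZ, hZX⟩, hxZ⟩ := hxc
    obtain ⟨z, hz⟩ := hnb Z hZ
    have hZsub : Z ⊆ X := fun w hw => by
      rw [hx]; exact (hind x w).2 ⟨Z, hZ, hxZ, hw⟩
    have hzZ : z ∈ Z := by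
      have : z ∈ ⋃₀ H := by rw [hH.2]; trivial
      obtain ⟨Y, hY, hzY⟩ := this
      rw [hz]; exact (hind z z).2 ⟨Y, hY, hzY, hzY⟩
    have hXsub : X ⊆ Z := fun w hw => by
      rw [hz]; exact (hind z w).2 ⟨X, hX, hZsub hzZ, hw⟩
    exact hZX (Set.Subset.antisymm hZsub hXsub)
end

section
/- Let ≲ be a quasiorder on U and let ≈ denote the tolerance ≳ ∘ ≲ (i.e., x ≈ y iff there exists a with a ≲ x and a ≲ y). If m is a minimal element of (U, ≲), then the neighbourhood ≈(m) equals the upset ↑m = {y : m ≲ y}, and ↑m is a block of ≈. -/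
variable {α : Type*}

theorem stmt8 (le : α → α → Prop) (hrefl : Reflexive le) (htrans : Transitive le)
    (m : α) (hm : QMinimal le m) :
    nbhd (approx le) m = upset le m ∧ IsBlock (approx le) (upset le m) := by
  have heq : nbhd (approx le) m = upset le m := by
    ext y
    constructor
    · rintro ⟨a, ham, hay⟩
      exact htrans (hm a ham) hay
    · intro h
      exact ⟨m, hrefl m, h⟩
  refine ⟨heq, ⟨⟨m, hrefl m⟩, ?_⟩, ?_⟩
  · intro a ha b hb
    exact ⟨m, ha, hb⟩
  · intro X ⟨hXne, hX⟩ hsub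
    apply Set.Subset.antisymm hsub
    intro x hx
    obtain ⟨a, ham, hax⟩ := hX m (hsub (hrefl m)) x hx
    exact htrans (hm a ham) hax
end

section
/- Let ≲ be a quasiorder on U that is bounded by minimal elements (every x has a minimal m with m ≲ x). Then H = {↑m : m minimal} is an irredundant covering of U, and the tolerance induced by H equals ≈ = ≳ ∘ ≲. -/
variable {α : Type*}

theorem stmt9 (le : α → α → Prop) (hrefl : Reflexive le) (htrans : Transitive le)
    (hb : BoundedByMinimals le) :
    IsIrredundant {S | ∃ m, QMinimal le m ∧ S = upset le m} ∧
      Induces {S | ∃ m, QMinimal le m ∧ S = upset le m} (approx le) := by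
  have hcov : IsCovering {S | ∃ m, QMinimal le m ∧ S = upset le m} := by
    constructor
    · rintro X ⟨m, hm, rfl⟩; exact ⟨m, hrefl m⟩
    · ext x
      simp only [Set.mem_univ, iff_true, Set.mem_sUnion]
      obtain ⟨m, hm, hmx⟩ := hb x
      exact ⟨upset le m, ⟨m, hm, rfl⟩, hmx⟩
  refine ⟨⟨hcov, ?_⟩, ?_⟩
  · rintro X ⟨m, hm, rfl⟩ ⟨_, hcov'⟩
    have hmem : m ∈ ⋃₀ ({S | ∃ m, QMinimal le m ∧ S = upset le m} \ {upset le m}) := by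
      rw [hcov']; trivial
    obtain ⟨S, ⟨⟨m', hm', rfl⟩, hne⟩, hmS⟩ := hmem
    apply hne
    have h1 : le m' m := hmS
    have h2 : le m m' := hm m' h1
    have heq : upset le m' = upset le m := by
      ext y
      exact ⟨fun hy => htrans h2 hy, fun hy => htrans h1 hy⟩
    simp [heq]
  · intro a b
    constructor
    · rintro ⟨c, hca, hcb⟩
      obtain ⟨m, hm, hmc⟩ := hb c
      exact ⟨upset le m, ⟨m, hm, rfl⟩, htrans hmc hca, htrans hmc hcb⟩
    · rintro ⟨X, ⟨m, hm, rfl⟩, ha, hb'⟩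
      exact ⟨m, ha, hb'⟩
end

section
/- A tolerance R on U is induced by an irredundant covering if and only if the quasiordered set (U, ≲_R) (where x ≲_R y iff R(x) ⊆ R(y)) is bounded by minimal elements and R equals the relation ≈_R = ≳_R ∘ ≲_R. -/
variable {α : Type*}

lemma approx_imp (R : α → α → Prop) (hrefl : Reflexive R) (hsymm : Symmetric R)
    {x y : α} (h : approx (tolLe R) x y) : R x y := by
  obtain ⟨a, hax, hay⟩ := h
  have haa : a ∈ nbhd R a := hrefl a
  have hxa : R x a := hax haa
  have : x ∈ nbhd R a := hsymm hxa
  exact hsymm (hay this)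

theorem stmt12 (R : α → α → Prop) (hrefl : Reflexive R) (hsymm : Symmetric R) :
    (∃ H : Set (Set α), IsIrredundant H ∧ Induces H R) ↔
      (BoundedByMinimals (tolLe R) ∧ ∀ x y, R x y ↔ approx (tolLe R) x y) := by
  constructor
  · rintro ⟨H, ⟨⟨hne, hcov⟩, hirr⟩, hind⟩
    -- every member of H has a "sole" point
    have sole : ∀ X ∈ H, ∃ a ∈ X, ∀ Y ∈ H, a ∈ Y → Y = X := by
      intro X hX
      have h1 := hirr X hX
      have h2 : ∃ a, a ∉ ⋃₀ (H \ {X}) := by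
        by_contra hc
        push_neg at hc
        exact h1 ⟨fun Y hY => hne Y hY.1, Set.eq_univ_of_forall hc⟩
      obtain ⟨a, ha⟩ := h2
      have haU : a ∈ ⋃₀ H := by rw [hcov]; trivial
      obtain ⟨Y, hY, haY⟩ := haU
      have hYX : Y = X := by
        by_contra hne'
        exact ha ⟨Y, ⟨hY, hne'⟩, haY⟩
      subst hYX
      refine ⟨a, haY, fun Z hZ haZ => ?_⟩
      by_contra hne'
      exact ha ⟨Z, ⟨hZ, hne'⟩, haZ⟩
    -- for a sole point a of X, nbhd R a = X
    have nbhd_sole : ∀ X ∈ H, ∀ a ∈ X, (∀ Y ∈ H, a ∈ Y → Y = X) →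
        nbhd R a = X := by
      intro X hX a haX hsole
      ext b
      constructor
      · intro hb
        obtain ⟨Y, hY, haY, hbY⟩ := (hind a b).1 hb
        exact (hsole Y hY haY) ▸ hbY
      · intro hb
        exact (hind a b).2 ⟨X, hX, haX, hb⟩
    -- for any x ∈ X ∈ H, X ⊆ nbhd R x
    have mem_sub : ∀ X ∈ H, ∀ x ∈ X, X ⊆ nbhd R x := by
      intro X hX x hx b hb
      exact (hind x b).2 ⟨X, hX, hx, hb⟩
    constructor
    · intro x
      have hxU : x ∈ ⋃₀ H := by rw [hcov]; trivial
      obtain ⟨X, hX, hxX⟩ := hxU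
      obtain ⟨a, haX, hsole⟩ := sole X hX
      have hna : nbhd R a = X := nbhd_sole X hX a haX hsole
      refine ⟨a, ?_, ?_⟩
      · intro y hy
        have hyX : y ∈ X := hna ▸ hy (hrefl y)
        rw [tolLe, hna]
        exact mem_sub X hX y hyX
      · rw [tolLe, hna]; exact mem_sub X hX x hxX
    · intro x y
      constructor
      · intro hxy
        obtain ⟨X, hX, hxX, hyX⟩ := (hind x y).1 hxy
        obtain ⟨a, haX, hsole⟩ := sole X hX
        have hna : nbhd R a = X := nbhd_sole X hX a haX hsole
        have h1 : tolLe R a x := by rw [tolLe, hna]; exact mem_sub X hX x hxX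
        have h2 : tolLe R a y := by rw [tolLe, hna]; exact mem_sub X hX y hyX
        exact ⟨a, h1, h2⟩
      · exact approx_imp R hrefl hsymm
  · rintro ⟨hbdd, happ⟩
    have fact2 : ∀ m a : α, tolLe R m a → R m a := fun m a h =>
      hsymm (h (hrefl m))
    have fact1 : ∀ m : α, QMinimal (tolLe R) m → ∀ a, R m a → tolLe R m a := by
      intro m hm a hma
      obtain ⟨c, hcm, hca⟩ := (happ m a).1 hma
      exact Set.Subset.trans (hm c hcm) hca
    refine ⟨{S | ∃ m, QMinimal (tolLe R) m ∧ S = nbhd R m}, ⟨⟨?_, ?_⟩, ?_⟩, ?_⟩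
    · rintro X ⟨m, _, rfl⟩
      exact ⟨m, hrefl m⟩
    · apply Set.eq_univ_of_forall
      intro x
      obtain ⟨m, hm, hmx⟩ := hbdd x
      exact ⟨nbhd R m, ⟨m, hm, rfl⟩, fact2 m x hmx⟩
    · rintro X ⟨m, hm, rfl⟩ ⟨_, huniv⟩
      have hmU : m ∈ ⋃₀ ({S | ∃ m', QMinimal (tolLe R) m' ∧ S = nbhd R m'} \ {nbhd R m}) := by
        rw [huniv]; trivial
      obtain ⟨Y, ⟨⟨m', hm', rfl⟩, hYne⟩, hmY⟩ := hmU
      apply hYne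
      have h1 : tolLe R m' m := fact1 m' hm' m hmY
      have h2 : tolLe R m m' := hm m' h1
      exact Set.mem_singleton_iff.2 (Set.Subset.antisymm h1 h2)
    · intro a b
      constructor
      · intro hab
        obtain ⟨c, hca, hcb⟩ := (happ a b).1 hab
        obtain ⟨m, hm, hmc⟩ := hbdd c
        exact ⟨nbhd R m, ⟨m, hm, rfl⟩, fact2 m a (Set.Subset.trans hmc hca),
          fact2 m b (Set.Subset.trans hmc hcb)⟩
      · rintro ⟨X, ⟨m, hm, rfl⟩, haX, hbX⟩
        exact (happ a b).2 ⟨m, fact1 m hm a haX, fact1 m hm b hbX⟩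
end

section
/- If a tolerance R on U is induced by an irredundant covering H, then H is a canonical base for R: H consists of R-blocks, H induces R, and for any X ∈ H the family H \ {X} does not induce R. -/
variable {α : Type*}

theorem stmt13 (R : α → α → Prop) (H : Set (Set α))
    (hH : IsIrredundant H) (hind : Induces H R) :
    CanonicalBase R H := by
  obtain ⟨⟨hne, hcov⟩, hirr⟩ := hH
  -- key: for each X ∈ H there is a point covered only by X
  have key : ∀ X ∈ H, ∃ u ∈ X, ∀ Y ∈ H, Y ≠ X → u ∉ Y := by
    intro X hX
    have h1 := hirr X hX
    have h2 : ¬ (⋃₀ (H \ {X}) = Set.univ) := by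
      intro h
      exact h1 ⟨fun Y hY => hne Y hY.1, h⟩
    obtain ⟨u, hu⟩ : ∃ u, u ∉ ⋃₀ (H \ {X}) := by
      by_contra h
      push_neg at h
      exact h2 (Set.eq_univ_of_forall h)
    have huX : u ∈ X := by
      have : u ∈ ⋃₀ H := by rw [hcov]; trivial
      obtain ⟨Z, hZ, huZ⟩ := this
      by_cases hZX : Z = X
      · exact hZX ▸ huZ
      · exact absurd ⟨Z, ⟨hZ, hZX⟩, huZ⟩ hu
    exact ⟨u, huX, fun Y hY hYX huY => hu ⟨Y, ⟨hY, hYX⟩, huY⟩⟩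
  refine ⟨?_, hind, ?_⟩
  · intro X hX
    obtain ⟨u, huX, honly⟩ := key X hX
    have hpre : IsPreblock R X :=
      ⟨⟨u, huX⟩, fun a ha b hb => (hind a b).2 ⟨X, hX, ha, hb⟩⟩
    refine ⟨hpre, fun B hB hXB => Set.Subset.antisymm hXB fun b hb => ?_⟩
    have hRub : R u b := hB.2 u (hXB huX) b hb
    obtain ⟨Y, hY, huY, hbY⟩ := (hind u b).1 hRub
    by_cases hYX : Y = X
    · exact hYX ▸ hbY
    · exact absurd huY (honly Y hY hYX)
  · intro X hX hind'
    obtain ⟨u, huX, honly⟩ := key X hX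
    have : R u u := (hind u u).2 ⟨X, hX, huX, huX⟩
    obtain ⟨Y, ⟨hY, hYX⟩, huY, -⟩ := (hind' u u).1 this
    exact honly Y hY hYX huY
end

section
/- Let R be a tolerance induced by a family H of R-blocks. Then H is an irredundant covering of U if and only if H is the unique canonical base of R and every member of H is an R-neighbourhood R(x) for some x ∈ U. -/
variable {α : Type*}

theorem stmt14 (R : α → α → Prop) (hrefl : Reflexive R) (hsymm : Symmetric R)
    (H : Set (Set α)) (hblocks : ∀ X ∈ H, IsBlock R X) (hind : Induces H R) :
    IsIrredundant H ↔
      ((CanonicalBase R H ∧ ∀ K : Set (Set α), CanonicalBase R K → K = H) ∧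
        ∀ X ∈ H, ∃ x, X = nbhd R x) := by
  have hcov : IsCovering H := by
    refine ⟨fun X hX => (hblocks X hX).1.1, ?_⟩
    ext a
    simp only [Set.mem_univ, iff_true, Set.mem_sUnion]
    obtain ⟨X, hX, ha, -⟩ := (hind a a).1 (hrefl a)
    exact ⟨X, hX, ha⟩
  -- If x lies in X and in no other member of H, then X = R(x).
  have key : ∀ X ∈ H, ∀ x, x ∈ X → (∀ Y ∈ H, x ∈ Y → Y = X) → X = nbhd R x := by
    intro X hX x hx huniq
    apply Set.Subset.antisymm
    · intro y hy
      exact (hblocks X hX).1.2 x hx y hy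
    · intro y hy
      obtain ⟨Y, hY, hxY, hyY⟩ := (hind x y).1 hy
      exact (huniq Y hY hxY) ▸ hyY
  -- If X = R(x), then x lies in no other member of H.
  have key2 : ∀ X ∈ H, ∀ x, X = nbhd R x → ∀ Y ∈ H, x ∈ Y → Y = X := by
    intro X hX x hXx Y hY hxY
    have hYX : Y ⊆ X := by
      intro y hyY
      rw [hXx]
      exact (hblocks Y hY).1.2 x hxY y hyY
    exact (hblocks Y hY).2 X (hblocks X hX).1 hYX
  -- From irredundance at X, extract a sole element of X.
  have sole : ∀ X ∈ H, ¬ IsCovering (H \ {X}) →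
      ∃ x ∈ X, ∀ Y ∈ H, x ∈ Y → Y = X := by
    intro X hX hnc
    by_contra h
    push_neg at h
    apply hnc
    refine ⟨fun Y hY => (hblocks Y hY.1).1.1, ?_⟩
    ext a
    simp only [Set.mem_univ, iff_true, Set.mem_sUnion]
    have ha : a ∈ ⋃₀ H := by rw [hcov.2]; trivial
    obtain ⟨Z, hZ, haZ⟩ := ha
    by_cases hZX : Z = X
    · subst hZX
      obtain ⟨Y, hY, haY, hne⟩ := h a haZ
      exact ⟨Y, ⟨hY, hne⟩, haY⟩
    · exact ⟨Z, ⟨hZ, hZX⟩, haZ⟩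
  constructor
  · rintro ⟨-, hirr⟩
    have hnb : ∀ X ∈ H, ∃ x, X = nbhd R x := by
      intro X hX
      obtain ⟨x, hx, hu⟩ := sole X hX (hirr X hX)
      exact ⟨x, key X hX x hx hu⟩
    have hcb : CanonicalBase R H := by
      refine ⟨hblocks, hind, ?_⟩
      intro X hX hind'
      obtain ⟨x, hx, hu⟩ := sole X hX (hirr X hX)
      obtain ⟨Y, hY, hxY, -⟩ := (hind' x x).1 (hrefl x)
      exact hY.2 (hu Y hY.1 hxY)
    refine ⟨⟨hcb, ?_⟩, hnb⟩
    intro K hK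
    have hHK : H ⊆ K := by
      intro X hX
      obtain ⟨x, hx, hu⟩ := sole X hX (hirr X hX)
      have hXx : X = nbhd R x := key X hX x hx hu
      obtain ⟨Z, hZ, hxZ, -⟩ := (hK.2.1 x x).1 (hrefl x)
      have hZX : Z ⊆ X := by
        intro z hz
        rw [hXx]
        exact (hK.1 Z hZ).1.2 x hxZ z hz
      have : Z = X := (hK.1 Z hZ).2 X (hblocks X hX).1 hZX
      exact this ▸ hZ
    apply Set.Subset.antisymm _ hHK
    intro X hXK
    by_contra hXH
    apply hK.2.2 X hXK
    intro a b
    constructor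
    · intro hab
      obtain ⟨Y, hY, haY, hbY⟩ := (hind a b).1 hab
      exact ⟨Y, ⟨hHK hY, fun h => hXH (h ▸ hY)⟩, haY, hbY⟩
    · rintro ⟨Y, hY, haY, hbY⟩
      exact (hK.1 Y hY.1).1.2 a haY b hbY
  · rintro ⟨⟨-, -⟩, hnb⟩
    refine ⟨hcov, ?_⟩
    intro X hX hc
    obtain ⟨x, hXx⟩ := hnb X hX
    have hxX : x ∈ X := hXx ▸ hrefl x
    have hx : x ∈ ⋃₀ (H \ {X}) := by rw [hc.2]; trivial
    obtain ⟨Y, hY, hxY⟩ := hx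
    exact hY.2 (key2 X hX x hXx Y hY.1 hxY)
end

section
/- Let (U, ≲) be a quasiordered set with Helly number 2 (every preblock of ≈ = ≳∘≲ has a lower bound). Then the blocks of the tolerance ≈ are exactly the upsets ↑m of minimal elements m of (U, ≲). -/
variable {α : Type*}

theorem stmt15 (le : α → α → Prop) (hrefl : Reflexive le) (htrans : Transitive le)
    (hh : Helly2 le) (B : Set α) :
    IsBlock (approx le) B ↔ ∃ m, QMinimal le m ∧ B = upset le m := by
  constructor
  · rintro ⟨⟨hne, hpair⟩, hmax⟩
    obtain ⟨a, ha⟩ := hh B hne hpair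
    have hBa : B = upset le a := by
      apply hmax
      · exact ⟨⟨a, hrefl a⟩, fun x hx y hy => ⟨a, hx, hy⟩⟩
      · exact fun x hx => ha x hx
    refine ⟨a, ?_, hBa⟩
    intro y hy
    have hBy : B = upset le y := by
      apply hmax
      · exact ⟨⟨y, hrefl y⟩, fun u hu v hv => ⟨y, hu, hv⟩⟩
      · intro x hx
        have : le a x := ha x hx
        exact htrans hy this
    have hyB : y ∈ B := by rw [hBy]; exact hrefl y
    rw [hBa] at hyB
    exact hyB
  · rintro ⟨m, hm, rfl⟩
    refine ⟨⟨⟨m, hrefl m⟩, fun x hx y hy => ⟨m, hx, hy⟩⟩, ?_⟩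
    rintro X ⟨hXne, hXpair⟩ hsub
    obtain ⟨a, ha⟩ := hh X hXne hXpair
    have ham : le a m := ha m (hsub (hrefl m))
    have hma : le m a := hm a ham
    apply Set.Subset.antisymm hsub
    intro x hx
    exact htrans hma (ha x hx)
end

section
/- For a quasiordered set (U, ≲), the following are equivalent: (a) the Helly number of (U, ≲) is 2; (b) B(≈) = {↑m : m minimal}; (c) B(≈) is an irredundant covering of U and (U, ≲) is bounded by minimal elements, where ≈ = ≳ ∘ ≲. -/
variable {α : Type*}

lemma upset_block (le : α → α → Prop) (hrefl : Reflexive le) (htrans : Transitive le)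
    {m : α} (hm : QMinimal le m) : IsBlock (approx le) (upset le m) := by
  constructor
  · exact ⟨⟨m, hrefl m⟩, fun a ha b hb => ⟨m, ha, hb⟩⟩
  · intro X hX hsub
    refine Set.Subset.antisymm hsub fun x hx => ?_
    obtain ⟨a, ham, hax⟩ := hX.2 m (hsub (hrefl m)) x hx
    exact htrans (hm a ham) hax

lemma exists_block (le : α → α → Prop) {X : Set α} (hX : IsPreblock (approx le) X) :
    ∃ B, IsBlock (approx le) B ∧ X ⊆ B := by
  have hchain : ∀ c ⊆ {Y | IsPreblock (approx le) Y}, IsChain (· ⊆ ·) c → c.Nonempty →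
      ∃ ub ∈ {Y | IsPreblock (approx le) Y}, ∀ s ∈ c, s ⊆ ub := by
    intro c hcS hchain hcne
    obtain ⟨Y, hYc⟩ := hcne
    refine ⟨⋃₀ c, ⟨?_, ?_⟩, fun s hs => Set.subset_sUnion_of_mem hs⟩
    · obtain ⟨y, hy⟩ := (hcS hYc).1
      exact ⟨y, Y, hYc, hy⟩
    · rintro a ⟨Y1, hY1, ha⟩ b ⟨Y2, hY2, hb⟩
      rcases hchain.total hY1 hY2 with h | h
      · exact (hcS hY2).2 a (h ha) b hb
      · exact (hcS hY1).2 a ha b (h hb)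
  obtain ⟨B, hXB, hBmem, hBmax⟩ :=
    zorn_subset_nonempty {Y | IsPreblock (approx le) Y} hchain X hX
  exact ⟨B, ⟨hBmem, fun Z hZ hBZ => ((hBmax hZ hBZ).antisymm hBZ).symm⟩, hXB⟩

lemma block_eq_upset (le : α → α → Prop) (hrefl : Reflexive le) (htrans : Transitive le)
    (hH : Helly2 le) {B : Set α} (hB : IsBlock (approx le) B) :
    ∃ m, QMinimal le m ∧ B = upset le m := by
  obtain ⟨a, ha⟩ := hH B hB.1.1 hB.1.2
  have key : ∀ z, (∀ x ∈ B, approx le z x) → z ∈ B := by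
    intro z hz
    have : B = insert z B := by
      refine hB.2 _ ⟨⟨z, Set.mem_insert z B⟩, ?_⟩ (Set.subset_insert z B)
      rintro u (rfl | hu) v (rfl | hv)
      · exact ⟨_, hrefl _, hrefl _⟩
      · exact hz v hv
      · obtain ⟨w, hw1, hw2⟩ := hz u hu; exact ⟨w, hw2, hw1⟩
      · exact hB.1.2 u hu v hv
    rw [this]; exact Set.mem_insert z B
  have haB : a ∈ B := key a fun x hx => ⟨a, hrefl a, ha x hx⟩
  have hmin : QMinimal le a := by
    intro y hya
    have : y ∈ B := key y fun x hx => ⟨y, hrefl y, htrans hya (ha x hx)⟩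
    exact ha y this
  refine ⟨a, hmin, Set.Subset.antisymm (fun x hx => ha x hx) fun z hz => ?_⟩
  exact key z fun x hx => ⟨a, hz, ha x hx⟩

theorem stmt16 (le : α → α → Prop) (hrefl : Reflexive le) (htrans : Transitive le) :
    (Helly2 le ↔ {B | IsBlock (approx le) B} = {S | ∃ m, QMinimal le m ∧ S = upset le m}) ∧
    (Helly2 le ↔
      IsIrredundant {B | IsBlock (approx le) B} ∧ BoundedByMinimals le) := by
  -- singleton preblock
  have hsingle : ∀ x : α, IsPreblock (approx le) {x} := fun x =>
    ⟨⟨x, rfl⟩, by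
      intro a ha b hb
      simp only [Set.mem_singleton_iff] at ha hb
      subst ha; subst hb
      exact ⟨_, hrefl _, hrefl _⟩⟩
  -- everything belongs to some block
  have hmemblock : ∀ x : α, ∃ B, IsBlock (approx le) B ∧ x ∈ B := by
    intro x
    obtain ⟨B, hB, hsub⟩ := exists_block le (hsingle x)
    exact ⟨B, hB, hsub rfl⟩
  have covering : IsCovering {B : Set α | IsBlock (approx le) B} := by
    refine ⟨fun X hX => hX.1.1, Set.eq_univ_of_forall fun x => ?_⟩
    obtain ⟨B, hB, hxB⟩ := hmemblock x
    exact ⟨B, hB, hxB⟩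
  -- (a) ↔ (b)
  have hab : Helly2 le ↔
      {B | IsBlock (approx le) B} = {S | ∃ m, QMinimal le m ∧ S = upset le m} := by
    constructor
    · intro hH
      apply Set.eq_of_subset_of_subset
      · exact fun B hB => block_eq_upset le hrefl htrans hH hB
      · rintro S ⟨m, hm, rfl⟩
        exact upset_block le hrefl htrans hm
    · intro heq A hAne hApair
      obtain ⟨B, hB, hAB⟩ := exists_block le ⟨hAne, hApair⟩
      obtain ⟨m, hm, rfl⟩ : ∃ m, QMinimal le m ∧ B = upset le m := heq.subset hB
      exact ⟨m, fun x hx => hAB hx⟩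
  refine ⟨hab, ?_⟩
  constructor
  · intro hH
    refine ⟨⟨covering, ?_⟩, ?_⟩
    · intro B hBmem hcov
      obtain ⟨m, hm, rfl⟩ := block_eq_upset le hrefl htrans hH hBmem
      have : m ∈ ⋃₀ ({B | IsBlock (approx le) B} \ {upset le m}) := by
        rw [hcov.2]; trivial
      obtain ⟨X, ⟨hXblock, hXne⟩, hmX⟩ := this
      obtain ⟨m', hm', rfl⟩ := block_eq_upset le hrefl htrans hH hXblock
      apply hXne
      have hmx' : le m' m := hmX
      have h1 : le m m' := hm m' hmx'
      have : upset le m' = upset le m := by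
        ext y
        exact ⟨fun hy => htrans h1 hy, fun hy => htrans hmx' hy⟩
      exact this
    · intro x
      obtain ⟨B, hB, hxB⟩ := hmemblock x
      obtain ⟨m, hm, rfl⟩ := block_eq_upset le hrefl htrans hH hB
      exact ⟨m, hm, hxB⟩
  · rintro ⟨⟨_, hirr⟩, hbdd⟩ A hAne hApair
    obtain ⟨B, hB, hAB⟩ := exists_block le ⟨hAne, hApair⟩
    have hnc := hirr B hB
    -- removing B fails to cover: some x is only in B
    have : ∃ x, x ∉ ⋃₀ ({B' : Set α | IsBlock (approx le) B'} \ {B}) := by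
      by_contra h
      push_neg at h
      exact hnc ⟨fun X hX => hX.1.1.1, Set.eq_univ_of_forall h⟩
    obtain ⟨x, hx⟩ := this
    obtain ⟨m, hm, hmx⟩ := hbdd x
    have hub : IsBlock (approx le) (upset le m) := upset_block le hrefl htrans hm
    have hBm : B = upset le m := by
      by_contra hne
      exact hx ⟨upset le m, ⟨hub, fun h => hne (h.symm)⟩, hmx⟩
    have hsub : A ⊆ upset le m := hBm ▸ hAB
    exact ⟨m, fun y hy => hsub hy⟩
end

section
/- Let (U, ≲) be a finite quasiordered set. The Helly number of (U, ≲) is 2 if and only if for all minimal elements a₁, a₂, a₃, if the pairwise intersections ↑a₁ ∩ ↑a₂, ↑a₁ ∩ ↑a₃, ↑a₂ ∩ ↑a₃ are all nonempty, then there exists a minimal element a with (↑a₁ ∩ ↑a₂) ∪ (↑a₁ ∩ ↑a₃) ∪ (↑a₂ ∩ ↑a₃) ⊆ ↑a. -/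
variable {α : Type*}

theorem stmt17 [Finite α] (le : α → α → Prop) (hrefl : Reflexive le)
    (htrans : Transitive le) :
    Helly2 le ↔
      ∀ a₁ a₂ a₃, QMinimal le a₁ → QMinimal le a₂ → QMinimal le a₃ →
        (upset le a₁ ∩ upset le a₂).Nonempty →
        (upset le a₁ ∩ upset le a₃).Nonempty →
        (upset le a₂ ∩ upset le a₃).Nonempty →
        ∃ a, QMinimal le a ∧
          (upset le a₁ ∩ upset le a₂) ∪ (upset le a₁ ∩ upset le a₃) ∪
            (upset le a₂ ∩ upset le a₃) ⊆ upset le a := by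
  classical
  -- every element has a minimal element below it
  have hmin : ∀ x : α, ∃ m, QMinimal le m ∧ le m x := by
    intro x
    set s : α → α → Prop := fun a b => le a b ∧ ¬ le b a with hs
    haveI : IsTrans α s := ⟨fun a b c hab hbc =>
      ⟨htrans hab.1 hbc.1, fun h => hab.2 (htrans hbc.1 h)⟩⟩
    haveI : IsIrrefl α s := ⟨fun a h => h.2 h.1⟩
    have hwf : WellFounded s := Finite.wellFounded_of_trans_of_irrefl s
    obtain ⟨m, hmx, hm⟩ := hwf.has_min {y | le y x} ⟨x, hrefl x⟩
    refine ⟨m, fun y hy => ?_, hmx⟩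
    by_contra hmy
    exact hm y (htrans hy hmx) ⟨hy, hmy⟩
  constructor
  · intro H a₁ a₂ a₃ h₁ h₂ h₃ n₁₂ n₁₃ n₂₃
    set A := (upset le a₁ ∩ upset le a₂) ∪ (upset le a₁ ∩ upset le a₃) ∪
        (upset le a₂ ∩ upset le a₃) with hA
    obtain ⟨x₀, hx₀⟩ := n₁₂
    have hAne : A.Nonempty := ⟨x₀, Or.inl (Or.inl hx₀)⟩
    have hpair : ∀ x ∈ A, ∀ y ∈ A, ∃ a, le a x ∧ le a y := by
      rintro x ((⟨hx1, hx2⟩ | ⟨hx1, hx2⟩) | ⟨hx1, hx2⟩) y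
          ((⟨hy1, hy2⟩ | ⟨hy1, hy2⟩) | ⟨hy1, hy2⟩)
      · exact ⟨a₁, hx1, hy1⟩
      · exact ⟨a₁, hx1, hy1⟩
      · exact ⟨a₂, hx2, hy1⟩
      · exact ⟨a₁, hx1, hy1⟩
      · exact ⟨a₁, hx1, hy1⟩
      · exact ⟨a₃, hx2, hy2⟩
      · exact ⟨a₂, hx1, hy2⟩
      · exact ⟨a₃, hx2, hy2⟩
      · exact ⟨a₂, hx1, hy1⟩
    obtain ⟨b, hb⟩ := H A hAne hpair
    obtain ⟨m, hmmin, hmb⟩ := hmin b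
    exact ⟨m, hmmin, fun x hx => htrans hmb (hb x hx)⟩
  · intro H A hAne hpair
    -- reduce to finsets and do strong induction on cardinality
    have hAfin : A.Finite := Set.toFinite A
    have key : ∀ n (s : Finset α), s.card ≤ n → s.Nonempty →
        (∀ x ∈ s, ∀ y ∈ s, ∃ a, le a x ∧ le a y) →
        ∃ a, QMinimal le a ∧ ∀ x ∈ s, le a x := by
      intro n
      induction n with
      | zero =>
        intro s hcard hne _
        exact absurd (Finset.card_pos.mpr hne) (by omega)
      | succ n ih =>
        intro s hcard hne hp
        by_cases hsmall : s.card ≤ 2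
        · -- at most two elements
          obtain ⟨x, hx⟩ := hne
          by_cases hall : ∀ y ∈ s, y = x
          · obtain ⟨m, hm, hmx⟩ := hmin x
            exact ⟨m, hm, fun y hy => (hall y hy) ▸ hmx⟩
          · push_neg at hall
            obtain ⟨y, hy, hyx⟩ := hall
            obtain ⟨b, hbx, hby⟩ := hp x hx y hy
            obtain ⟨m, hm, hmb⟩ := hmin b
            refine ⟨m, hm, fun z hz => ?_⟩
            -- s has card ≤ 2 and contains x ≠ y, so z = x or z = y
            have : z = x ∨ z = y := by
              by_contra hzc
              push_neg at hzc
              have : ({z, x, y} : Finset α) ⊆ s := by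
                intro w hw
                simp only [Finset.mem_insert, Finset.mem_singleton] at hw
                rcases hw with rfl | rfl | rfl <;> assumption
              have h3 : ({z, x, y} : Finset α).card = 3 := by
                rw [Finset.card_insert_of_notMem (by simp [hzc.1, hzc.2]),
                  Finset.card_insert_of_notMem (by simp [hyx.symm])]
                simp
              have := Finset.card_le_card this
              omega
            rcases this with rfl | rfl
            · exact htrans hmb hbx
            · exact htrans hmb hby
        · -- at least 3 elements: pick three distinct elements
          push_neg at hsmall
          have h3 : 3 ≤ s.card := hsmall
          obtain ⟨x₁, hx₁⟩ := Finset.card_pos.mp (show 0 < s.card by omega)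
          have h2 : (s.erase x₁).Nonempty :=
            Finset.card_pos.mp (by rw [Finset.card_erase_of_mem hx₁]; omega)
          obtain ⟨x₂, hx₂'⟩ := h2
          have hx₂ : x₂ ∈ s := Finset.mem_of_mem_erase hx₂'
          have hne21 : x₂ ≠ x₁ := Finset.ne_of_mem_erase hx₂'
          have h2' : ((s.erase x₁).erase x₂).Nonempty := by
            apply Finset.card_pos.mp
            rw [Finset.card_erase_of_mem hx₂', Finset.card_erase_of_mem hx₁]
            omega
          obtain ⟨x₃, hx₃'⟩ := h2'
          have hne32 : x₃ ≠ x₂ := Finset.ne_of_mem_erase hx₃'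
          have hx₃'' : x₃ ∈ s.erase x₁ := Finset.mem_of_mem_erase hx₃'
          have hne31 : x₃ ≠ x₁ := Finset.ne_of_mem_erase hx₃''
          have hx₃ : x₃ ∈ s := Finset.mem_of_mem_erase hx₃''
          -- apply the IH to the three erased sets
          have step : ∀ z ∈ s, ∃ a, QMinimal le a ∧ ∀ x ∈ s.erase z, le a x := by
            intro z hz
            apply ih
            · rw [Finset.card_erase_of_mem hz]; omega
            · -- erase z is nonempty since card ≥ 3
              apply Finset.card_pos.mp
              rw [Finset.card_erase_of_mem hz]; omega
            · intro x hx y hy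
              exact hp x (Finset.mem_of_mem_erase hx) y (Finset.mem_of_mem_erase hy)
          obtain ⟨a₁, ha₁m, ha₁⟩ := step x₁ hx₁
          obtain ⟨a₂, ha₂m, ha₂⟩ := step x₂ hx₂
          obtain ⟨a₃, ha₃m, ha₃⟩ := step x₃ hx₃
          have m12 : x₃ ∈ upset le a₁ ∩ upset le a₂ :=
            ⟨ha₁ x₃ (Finset.mem_erase.mpr ⟨hne31, hx₃⟩),
             ha₂ x₃ (Finset.mem_erase.mpr ⟨hne32, hx₃⟩)⟩
          have m13 : x₂ ∈ upset le a₁ ∩ upset le a₃ :=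
            ⟨ha₁ x₂ (Finset.mem_erase.mpr ⟨hne21, hx₂⟩),
             ha₃ x₂ (Finset.mem_erase.mpr ⟨hne32.symm, hx₂⟩)⟩
          have m23 : x₁ ∈ upset le a₂ ∩ upset le a₃ :=
            ⟨ha₂ x₁ (Finset.mem_erase.mpr ⟨hne21.symm, hx₁⟩),
             ha₃ x₁ (Finset.mem_erase.mpr ⟨hne31.symm, hx₁⟩)⟩
          obtain ⟨a, ham, ha⟩ := H a₁ a₂ a₃ ha₁m ha₂m ha₃m ⟨x₃, m12⟩ ⟨x₂, m13⟩ ⟨x₁, m23⟩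
          refine ⟨a, ham, fun x hx => ?_⟩
          by_cases e1 : x = x₁
          · exact ha (Or.inr (e1 ▸ m23))
          by_cases e2 : x = x₂
          · exact ha (Or.inl (Or.inr (e2 ▸ m13)))
          · -- x ∈ erase x₁ and erase x₂
            have : x ∈ upset le a₁ ∩ upset le a₂ :=
              ⟨ha₁ x (Finset.mem_erase.mpr ⟨e1, hx⟩),
               ha₂ x (Finset.mem_erase.mpr ⟨e2, hx⟩)⟩
            exact ha (Or.inl (Or.inl this))
    obtain ⟨a, _, ha⟩ := key hAfin.toFinset.card hAfin.toFinset le_rfl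
      (by rwa [Set.Finite.toFinset_nonempty])
      (fun x hx y hy =>
        hpair x (hAfin.mem_toFinset.mp hx) y (hAfin.mem_toFinset.mp hy))
    exact ⟨a, fun x hx => ha x (hAfin.mem_toFinset.mpr hx)⟩
end

section
/- Let L be a finite distributive lattice with least element 0. The Helly number of the partially ordered set (L \ {0}, ≤) is 2 if and only if L has at most two distinct atoms. -/
variable {α : Type*}

theorem stmt19 (L : Type*) [DistribLattice L] [OrderBot L] [Finite L] :
    (∀ A : Set L, A.Nonempty → (∀ x ∈ A, x ≠ ⊥) →
        (∀ x ∈ A, ∀ y ∈ A, ∃ a, a ≠ ⊥ ∧ a ≤ x ∧ a ≤ y) →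
        ∃ a, a ≠ ⊥ ∧ ∀ x ∈ A, a ≤ x) ↔
      ∀ a b c : L, IsAtom a → IsAtom b → IsAtom c → a = b ∨ a = c ∨ b = c := by
  constructor
  · intro helly a b c ha hb hc
    by_contra hne
    push_neg at hne
    obtain ⟨hab, hac, hbc⟩ := hne
    have hinf : ∀ x y : L, IsAtom x → IsAtom y → x ≠ y → x ⊓ y = ⊥ := by
      intro x y hx hy hxy
      rcases (hx.le_iff.mp inf_le_left) with h | h
      · exact h
      · exact absurd ((hy.le_iff.mp (h ▸ inf_le_right)).resolve_left hx.1) hxy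
    set A : Set L := {a ⊔ b, a ⊔ c, b ⊔ c} with hA
    obtain ⟨d, hd, hdle⟩ := helly A ⟨a ⊔ b, by simp [hA]⟩
      (by
        rintro x (rfl | rfl | rfl) h <;>
          [exact ha.1 (le_bot_iff.mp (h ▸ le_sup_left));
           exact ha.1 (le_bot_iff.mp (h ▸ le_sup_left));
           exact hb.1 (le_bot_iff.mp (h ▸ le_sup_left))])
      (by
        rintro x (rfl | rfl | rfl) y (rfl | rfl | rfl)
        · exact ⟨a, ha.1, le_sup_left, le_sup_left⟩
        · exact ⟨a, ha.1, le_sup_left, le_sup_left⟩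
        · exact ⟨b, hb.1, le_sup_right, le_sup_left⟩
        · exact ⟨a, ha.1, le_sup_left, le_sup_left⟩
        · exact ⟨a, ha.1, le_sup_left, le_sup_left⟩
        · exact ⟨c, hc.1, le_sup_right, le_sup_right⟩
        · exact ⟨b, hb.1, le_sup_left, le_sup_right⟩
        · exact ⟨c, hc.1, le_sup_right, le_sup_right⟩
        · exact ⟨b, hb.1, le_sup_left, le_sup_left⟩)
    have h1 : d ≤ a ⊔ b := hdle _ (by simp [hA])
    have h2 : d ≤ a ⊔ c := hdle _ (by simp [hA])
    have h3 : d ≤ b ⊔ c := hdle _ (by simp [hA])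
    have key : ∀ x y z : L, IsAtom x → IsAtom y → IsAtom z → x ≠ y → x ≠ z →
        d ≤ y ⊔ z → d ⊓ x = ⊥ := by
      intro x y z hx hy hz hxy hxz hdyz
      rcases hx.le_iff.mp inf_le_right with h | h
      · exact h
      · exfalso
        have hxle : x ≤ y ⊔ z := le_trans (h ▸ inf_le_left) hdyz
        have : x = ⊥ := by
          have := inf_eq_left.mpr hxle
          rw [inf_sup_left, hinf x y hx hy hxy, hinf x z hx hz hxz, sup_idem] at this
          exact this.symm
        exact hx.1 this
    have ka : d ⊓ a = ⊥ := key a b c ha hb hc hab hac h3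
    have kb : d ⊓ b = ⊥ := key b a c hb ha hc (Ne.symm hab) hbc h2
    have hdb : d = ⊥ := by
      have := inf_eq_left.mpr h1
      rw [inf_sup_left, ka, kb, sup_idem] at this
      exact this.symm
    exact hd hdb
  · intro h2 A hAne hAnb hAp
    obtain ⟨x₀, hx₀⟩ := hAne
    obtain ⟨m, hm, hmx₀⟩ := (eq_bot_or_exists_atom_le x₀).resolve_left (hAnb _ hx₀)
    by_cases hall : ∀ x ∈ A, m ≤ x
    · exact ⟨m, hm.1, hall⟩
    · push_neg at hall
      obtain ⟨x₁, hx₁, hmx₁⟩ := hall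
      obtain ⟨m', hm', hm'x₁⟩ := (eq_bot_or_exists_atom_le x₁).resolve_left (hAnb _ hx₁)
      have hmm' : m ≠ m' := fun h => hmx₁ (h ▸ hm'x₁)
      refine ⟨m', hm'.1, fun x hx => ?_⟩
      obtain ⟨a, hane, hax, hax₁⟩ := hAp x hx x₁ hx₁
      obtain ⟨n, hn, hna⟩ := (eq_bot_or_exists_atom_le a).resolve_left hane
      have hnm : n ≠ m := fun h => hmx₁ (h ▸ (hna.trans hax₁))
      rcases h2 n m m' hn hm hm' with h | h | h
      · exact absurd h hnm
      · exact h ▸ (hna.trans hax)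
      · exact absurd h hmm'
end
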